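/- Let ∇ be the row vector (Δ₂, Δ₃ − Δ₁Δ₂, Δ₁). Then (1) ∇ · (A − I) = 0 (the vector-matrix product of ∇ with A − I is the zero row vector), and (2) if Δ₁ ≠ 0, then the matrix A − I, regarded as a matrix over ℚ, has rank exactly 2. -/

import Mathlib

open Matrix

/-- The matrix `A_j` with rows `(0,1,0)`, `(0,0,1)`, `(1, −Δ_j, Δ_{j+2})`. -/
def helixMatrix (Δ : ℤ → ℤ) (j : ℤ) : Matrix (Fin 3) (Fin 3) ℤ :=
  !![0, 1, 0; 0, 0, 1; 1, -Δ j, Δ (j + 2)]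

/-- The matrix `A := A₃ * A₂ * A₁`. -/
def helixA (Δ : ℤ → ℤ) : Matrix (Fin 3) (Fin 3) ℤ :=
  helixMatrix Δ 3 * helixMatrix Δ 2 * helixMatrix Δ 1

lemma helixA_eq (Δ : ℤ → ℤ) (hper : ∀ i : ℤ, Δ (i + 3) = Δ i) :
    helixA Δ = !![1, -Δ 1, Δ 3;
                  Δ 1, 1 - Δ 1 ^ 2, Δ 1 * Δ 3 - Δ 2;
                  Δ 1 * Δ 2 - Δ 3, Δ 2 + Δ 1 * Δ 3 - Δ 1 ^ 2 * Δ 2,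
                    1 + Δ 1 * Δ 2 * Δ 3 - Δ 2 ^ 2 - Δ 3 ^ 2] := by
  have h4 : Δ 4 = Δ 1 := by simpa using hper 1
  have h5 : Δ 5 = Δ 2 := by simpa using hper 2
  rw [helixA, helixMatrix, helixMatrix, helixMatrix]
  norm_num [h4, h5]
  refine ⟨⟨?_, ?_⟩, ?_, ?_, ?_⟩ <;> ring

theorem nabla_kernel_and_rank (Δ : ℤ → ℤ) (hper : ∀ i : ℤ, Δ (i + 3) = Δ i) :
    ![Δ 2, Δ 3 - Δ 1 * Δ 2, Δ 1] ᵥ* (helixA Δ - 1) = 0 ∧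
    (Δ 1 ≠ 0 → ((helixA Δ - 1).map (Int.cast : ℤ → ℚ)).rank = 2) := by
  have hA := helixA_eq Δ hper
  constructor
  · funext j
    rw [hA]
    fin_cases j <;>
      simp [Matrix.vecMul, dotProduct, Fin.sum_univ_three, Matrix.sub_apply,
        Matrix.one_apply, Matrix.vecHead, Matrix.vecTail] <;> ring
  · intro ha
    set a : ℚ := (Δ 1 : ℚ) with ha'
    set b : ℚ := (Δ 2 : ℚ) with hb'
    set c : ℚ := (Δ 3 : ℚ) with hc'
    have haq : a ≠ 0 := Int.cast_ne_zero.mpr ha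
    have hM : (helixA Δ - 1).map (Int.cast : ℤ → ℚ) =
        !![0, -a, c; a, -a ^ 2, a * c - b;
           a * b - c, b + a * c - a ^ 2 * b, a * b * c - b ^ 2 - c ^ 2] := by
      rw [hA]
      ext i j
      fin_cases i <;> fin_cases j <;>
        simp [Matrix.map_apply, Matrix.sub_apply, Matrix.one_apply, ha', hb', hc'] <;>
        push_cast <;> ring
    rw [hM]
    set N : Matrix (Fin 3) (Fin 3) ℚ :=
      !![0, -a, c; a, -a ^ 2, a * c - b;
         a * b - c, b + a * c - a ^ 2 * b, a * b * c - b ^ 2 - c ^ 2] with hN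
    have hfac : N = !![1, 0; 0, 1; -b / a, (a * b - c) / a] *
        !![0, -a, c; a, -a ^ 2, a * c - b] := by
      ext i j
      fin_cases i <;> fin_cases j <;>
        simp [hN, Matrix.mul_apply, Fin.sum_univ_two] <;> field_simp <;> ring
    have hub : N.rank ≤ 2 := by
      rw [hfac]
      refine le_trans (Matrix.rank_mul_le_right _ _) ?_
      simpa using Matrix.rank_le_card_height (!![0, -a, c; a, -a ^ 2, a * c - b])
    have hEF : (!![(1:ℚ), 0, 0; 0, 1, 0] * N) * !![(1:ℚ), 0; 0, 1; 0, 0] =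
        !![0, -a; a, -a ^ 2] := by
      ext i j
      fin_cases i <;> fin_cases j <;>
        simp [hN, Matrix.mul_apply, Fin.sum_univ_two, Fin.sum_univ_three,
          Matrix.vecHead, Matrix.vecTail]
    have h2 : (!![(0:ℚ), -a; a, -a ^ 2]).rank = 2 := by
      have : IsUnit (!![(0:ℚ), -a; a, -a ^ 2]) := by
        rw [Matrix.isUnit_iff_isUnit_det]
        simp [Matrix.det_fin_two_of, haq]
      simpa using Matrix.rank_of_isUnit _ this
    have hlb : 2 ≤ N.rank := by
      calc (2 : ℕ) = ((!![(1:ℚ), 0, 0; 0, 1, 0] * N) * !![(1:ℚ), 0; 0, 1; 0, 0]).rank := by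
            rw [hEF, h2]
        _ ≤ (!![(1:ℚ), 0, 0; 0, 1, 0] * N).rank := Matrix.rank_mul_le_left _ _
        _ ≤ N.rank := Matrix.rank_mul_le_right _ _
    omega
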